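/- arXiv:2010.05165 — 2 statements merged into one kernel-verified Lean document; each statement's English description precedes it below -/
import Mathlib

section
/- The Thue–Morse sequence is not built from any finite word of even length: there is no word v over {0,1} of even length, starting and ending with 0, and a sequence of natural numbers (a_i) such that M = v 1^{a_1} v 1^{a_2} v ⋯. -/
/-- A block of `a` ones. -/
def ones (a : ℕ) : List Bool := List.replicate a true

/-- Words over {0,1} that begin and end with 0 (false = 0, true = 1). -/
def InF (v : List Bool) : Prop := v.head? = some false ∧ v.getLast? = some false

/-- `w` is a prefix of the infinite word `V`. -/
def PrefixOf (w : List Bool) (V : ℕ → Bool) : Prop :=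
  ∀ i, i < w.length → w.getD i false = V i

/-- Finite stages `v 1^{a 0} v 1^{a 1} v ⋯ v`. -/
def stage (v : List Bool) (a : ℕ → ℕ) : ℕ → List Bool
  | 0 => v
  | n + 1 => stage v a n ++ ones (a n) ++ v

/-- The infinite word `V` is built from `v`: `V = v 1^{a₁} v 1^{a₂} v ⋯`. -/
def BuiltFrom (V : ℕ → Bool) (v : List Bool) : Prop :=
  ∃ a : ℕ → ℕ, ∀ n, PrefixOf (stage v a n) V

/-- A finite word `w` is built from `v`: `w = v 1^{a₁} v ⋯ v 1^{a_k} v`, `k ≥ 1`. -/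
def FBuiltFrom (w v : List Bool) : Prop :=
  ∃ a : List ℕ, a ≠ [] ∧ w = v ++ (a.map fun n => ones n ++ v).flatten

/-- `A_V`, the set of words in `𝓕` from which `V` is built. -/
def AV (V : ℕ → Bool) : Set (List Bool) := {v | InF v ∧ BuiltFrom V v}

/-- `w` occurs in the infinite word `V` at position `k`. -/
def OccursAt (w : List Bool) (V : ℕ → Bool) (k : ℕ) : Prop :=
  ∀ i, i < w.length → w.getD i false = V (k + i)

/-- `w` is a factor (contiguous subword) of the infinite word `V`. -/
def FactorOfN (w : List Bool) (V : ℕ → Bool) : Prop := ∃ k, OccursAt w V k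

/-- `w` occurs in the bi-infinite word `x` at position `k`. -/
def OccursAtZ (w : List Bool) (x : ℤ → Bool) (k : ℤ) : Prop :=
  ∀ i, i < w.length → w.getD i false = x (k + (i : ℤ))

/-- `w` is a factor of the bi-infinite word `x`. -/
def FactorOfZ (w : List Bool) (x : ℤ → Bool) : Prop := ∃ k, OccursAtZ w x k

/-- The subshift associated to an infinite word `V`. -/
def Subshift (V : ℕ → Bool) : Set (ℤ → Bool) :=
  {x | ∀ w, FactorOfZ w x → FactorOfN w V}

/-- Thue–Morse words: `M 0 = 0`, `M (n+1) = M n ++ complement (M n)`. -/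
def M : ℕ → List Bool
  | 0 => [false]
  | n + 1 => M n ++ (M n).map (fun b => !b)

/-- The Thue–Morse sequence: parity of the number of 1's in binary expansion. -/
def tm (n : ℕ) : Bool := decide (((Nat.digits 2 n).count 1) % 2 = 1)

/-- Rank-two towers for the Thue–Morse sequence. -/
def M2 : ℕ → List Bool × List Bool
  | 0 => ([false], [false])
  | n + 1 =>
    if n % 2 = 1 then ((M2 n).1 ++ [true] ++ (M2 n).2, (M2 n).2 ++ [true] ++ (M2 n).1)
    else ((M2 n).1 ++ [true, true] ++ (M2 n).2, (M2 n).2 ++ (M2 n).1)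

lemma tm_two_mul (n : ℕ) : tm (2 * n) = tm n := by
  rcases Nat.eq_zero_or_pos n with h | h
  · simp [h]
  · unfold tm
    rw [Nat.digits_def' (by norm_num : 1 < 2) (by omega : 0 < 2 * n)]
    simp [Nat.mul_div_cancel_left, Nat.mul_mod_right]

lemma tm_two_mul_add_one (n : ℕ) : tm (2 * n + 1) = !tm n := by
  unfold tm
  rw [Nat.digits_def' (by norm_num : 1 < 2) (by omega : 0 < 2 * n + 1)]
  have h1 : (2 * n + 1) % 2 = 1 := by omega
  have h2 : (2 * n + 1) / 2 = n := by omega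
  rw [h1, h2]
  simp only [List.count_cons_self]
  rcases Nat.mod_two_eq_zero_or_one ((Nat.digits 2 n).count 1) with h | h <;>
    simp [Nat.add_mod, h]

lemma tm_ne (n : ℕ) : tm (2 * n) ≠ tm (2 * n + 1) := by
  rw [tm_two_mul, tm_two_mul_add_one]; cases tm n <;> simp

lemma occ_even_pos {m t : ℕ} (ht : t % 2 = 1)
    (hocc : ∀ i, i < m → tm (t + i) = tm i)
    (hex : ∃ i, i < m ∧ tm i ≠ decide (i % 2 = 1)) : False := by
  have hadj : ∀ i, i + 1 < m → tm i ≠ tm (i + 1) := by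
    intro i hi
    rcases Nat.mod_two_eq_zero_or_one i with h | h
    · obtain ⟨k, rfl⟩ : ∃ k, i = 2 * k := ⟨i / 2, by omega⟩
      exact tm_ne k
    · obtain ⟨k, hk⟩ : ∃ k, t + i = 2 * k := ⟨(t + i) / 2, by omega⟩
      have h1 := hocc i (by omega)
      have h2 := hocc (i + 1) hi
      rw [show t + (i + 1) = 2 * k + 1 by omega] at h2
      rw [hk] at h1
      rw [← h1, ← h2]
      exact tm_ne k
  have hval : ∀ i, i < m → tm i = decide (i % 2 = 1) := by
    intro i
    induction i with
    | zero => intro _; simp [show tm 0 = false by simp [tm]]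
    | succ i ih =>
      intro hi
      have h1 := ih (by omega)
      have h2 := hadj i hi
      rcases Nat.mod_two_eq_zero_or_one i with h | h <;>
        · rw [h1] at h2
          simp [h, Nat.add_mod] at h2 ⊢
          revert h2; cases tm (i + 1) <;> simp
  obtain ⟨i, hi, hne⟩ := hex
  exact hne (hval i hi)

lemma no_period : ∀ p, 0 < p → (∀ m, tm (m + p) = tm m) → False := by
  intro p
  induction p using Nat.strong_induction_on with
  | _ p ih =>
    intro hp h
    rcases Nat.mod_two_eq_zero_or_one p with he | ho
    · obtain ⟨q, rfl⟩ : ∃ q, p = 2 * q := ⟨p / 2, by omega⟩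
      refine ih q (by omega) (by omega) ?_
      intro m
      calc tm (m + q) = tm (2 * (m + q)) := (tm_two_mul _).symm
        _ = tm (2 * m + 2 * q) := by ring_nf
        _ = tm (2 * m) := h (2 * m)
        _ = tm m := tm_two_mul m
    · obtain ⟨q, rfl⟩ : ∃ q, p = 2 * q + 1 := ⟨p / 2, by omega⟩
      have h1 : ∀ k, tm k = !tm (k + q) := by
        intro k
        have hh := h (2 * k)
        rw [show 2 * k + (2 * q + 1) = 2 * (k + q) + 1 by ring] at hh
        rw [tm_two_mul_add_one, tm_two_mul] at hh
        exact hh.symm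
      have e1 : tm (2 * q) = tm 0 := by
        have a1 := h1 0
        have a2 := h1 q
        rw [show q + q = 2 * q by ring] at a2
        simp only [Nat.zero_add] at a1
        rw [a2] at a1
        simpa using a1.symm
      have e2 : tm (2 * q + 1) = tm 0 := by simpa using h 0
      exact tm_ne q (by rw [e1, e2])

theorem stmt4 : ¬ ∃ v : List Bool, InF v ∧ v.length % 2 = 0 ∧ BuiltFrom tm v := by
  rintro ⟨v, ⟨hhead, hlast⟩, hlen, a, hpref⟩
  set L := v.length with hLdef
  have hvne : v ≠ [] := by intro h; rw [h] at hhead; simp at hhead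
  have hL1 : 1 ≤ L := List.length_pos_iff.mpr hvne
  set s : ℕ → ℕ := fun j => j * L + ∑ i ∈ Finset.range j, a i with hsdef
  have hs0 : s 0 = 0 := by simp [hsdef]
  have hssucc : ∀ j, s (j + 1) = s j + L + a j := by
    intro j; simp [hsdef, Finset.sum_range_succ]; ring
  have hlen_stage : ∀ j, (stage v a j).length = s j + L := by
    intro j; induction j with
    | zero => simp [stage, hs0, hLdef]
    | succ j ih => simp [stage, ih, ones, hssucc]; omega
  have hocc_stage : ∀ j i, i < L → (stage v a j).getD (s j + i) false = v.getD i false := by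
    intro j i hi
    cases j with
    | zero => rw [hs0]; simp [stage]
    | succ j =>
      show (stage v a j ++ ones (a j) ++ v).getD (s (j + 1) + i) false = _
      rw [List.getD_append_right _ _ _ _ (by simp [hlen_stage, ones, hssucc]; try omega)]
      congr 1
      simp [hlen_stage, ones, hssucc]
  have hrun_stage : ∀ j k, k < a j → (stage v a (j + 1)).getD (s j + L + k) false = true := by
    intro j k hk
    show (stage v a j ++ ones (a j) ++ v).getD (s j + L + k) false = true
    rw [List.getD_append _ _ _ _ (by simp [hlen_stage, ones]; omega)]
    rw [List.getD_append_right _ _ _ _ (by simp [hlen_stage]; try omega)]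
    rw [hlen_stage]
    rw [List.getD_eq_getElem?_getD]
    rw [show s j + L + k - (s j + L) = k by omega]
    rw [ones, List.getElem?_replicate_of_lt (by omega)]
    simp
  have hvprefix : ∀ i, i < L → v.getD i false = tm i := by
    intro i hi
    exact hpref 0 i hi
  have hO : ∀ j i, i < L → tm (s j + i) = tm i := by
    intro j i hi
    have h1 := hpref j (s j + i) (by rw [hlen_stage]; omega)
    rw [← h1, hocc_stage j i hi, hvprefix i hi]
  have hR : ∀ j k, k < a j → tm (s j + L + k) = true := by
    intro j k hk
    have h1 := hpref (j + 1) (s j + L + k) (by rw [hlen_stage, hssucc]; omega)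
    rw [← h1, hrun_stage j k hk]
  -- last letter of v is 0
  have htmL1 : tm (L - 1) = false := by
    have h1 := hvprefix (L - 1) (by omega)
    rw [← h1]
    rw [List.getLast?_eq_getElem?] at hlast
    have hlast' : v[L - 1]? = some false := hlast
    rw [List.getD_eq_getElem?_getD, hlast']
    rfl
  have hL2 : L ≠ 2 := by
    intro h
    rw [h] at htmL1
    norm_num [tm] at htmL1
  have hL4 : 4 ≤ L := by omega
  -- all occurrences of v at even positions
  have hS : ∀ j, s j % 2 = 0 := by
    intro j
    rcases Nat.mod_two_eq_zero_or_one (s j) with h | h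
    · exact h
    · exact absurd (occ_even_pos h (hO j)
        ⟨L - 1, by omega, by rw [htmL1]; simp [show (L - 1) % 2 = 1 by omega]⟩) (by simp)
  have hA : ∀ j, a j % 2 = 0 := by
    intro j
    have := hS j; have := hS (j + 1); have := hssucc j
    omega
  -- halving
  set n := L / 2 with hndef
  have hLn : L = 2 * n := by omega
  have hO' : ∀ j i, i < n → tm (s j / 2 + i) = tm i := by
    intro j i hi
    have h1 : tm (s j / 2 + i) = tm (2 * (s j / 2 + i)) := (tm_two_mul _).symm
    rw [h1, show 2 * (s j / 2 + i) = s j + 2 * i by have := hS j; omega]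
    rw [hO j (2 * i) (by omega), tm_two_mul]
  have hR' : ∀ j k, k < a j / 2 → tm (s j / 2 + n + k) = true := by
    intro j k hk
    have h1 : tm (s j / 2 + n + k) = tm (2 * (s j / 2 + n + k)) := (tm_two_mul _).symm
    rw [h1, show 2 * (s j / 2 + n + k) = s j + L + 2 * k by have := hS j; omega]
    exact hR j (2 * k) (by have := hA j; omega)
  have ht0 : s 0 / 2 = 0 := by rw [hs0]
  have htsucc : ∀ j, s (j + 1) / 2 = s j / 2 + n + a j / 2 := by
    intro j
    have := hssucc j; have := hS j; have := hA j
    omega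
  have htm_n1 : tm (n - 1) = true := by
    have h2 := tm_ne (n - 1)
    rw [show 2 * (n - 1) + 1 = L - 1 by omega, htmL1] at h2
    have h3 : tm (2 * (n - 1)) = tm (n - 1) := tm_two_mul _
    rw [h3] at h2
    revert h2; cases tm (n - 1) <;> simp
  have hn2 : 2 ≤ n := by omega
  rcases Nat.mod_two_eq_zero_or_one n with hne | hno
  · -- n even
    rcases Nat.lt_or_ge n 4 with h4 | h4
    · -- n = 2, direct computation
      have hn : n = 2 := by omega
      have c1 : tm 1 = true := by norm_num [tm]
      have c2 : tm 2 = true := by norm_num [tm]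
      have c3 : tm 3 = false := by norm_num [tm]
      have c5 : tm 5 = false := by norm_num [tm]
      have c6 : tm 6 = false := by norm_num [tm]
      have t1 : s 1 / 2 = 2 + a 0 / 2 := by rw [htsucc 0, ht0, hn]
      have hocc1 := hO' 1
      rw [t1] at hocc1
      rcases Nat.lt_or_ge (a 0 / 2) 2 with hb | hb
      · rcases Nat.lt_or_ge (a 0 / 2) 1 with hb0 | hb0
        · -- a 0 / 2 = 0
          have := hocc1 0 (by omega)
          simp [show a 0 / 2 = 0 by omega, show tm 0 = false by simp [tm], c2] at this
        · -- a 0 / 2 = 1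
          have hb1 : a 0 / 2 = 1 := by omega
          have t2 : s 2 / 2 = 5 + a 1 / 2 := by rw [htsucc 1, t1, hb1, hn]
          have hr1 := hR' 1
          rw [t1, hb1, hn] at hr1
          have hb2 : a 1 / 2 = 0 := by
            rcases Nat.lt_or_ge (a 1 / 2) 1 with h | h
            · omega
            · have := hr1 0 (by omega)
              simp [c5] at this
          have := hO' 2 1 (by omega)
          rw [t2, hb2] at this
          simp [c1, c6] at this
      · -- a 0 / 2 ≥ 2
        have := hR' 0 1 (by omega)
        rw [ht0, hn] at this
        simp [c3] at this
    · -- n ≥ 4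
      have c2 : tm 2 = true := by norm_num [tm]
      have hT : ∀ j, s j / 2 % 2 = 0 := by
        intro j
        rcases Nat.mod_two_eq_zero_or_one (s j / 2) with h | h
        · exact h
        · exact absurd (occ_even_pos h (hO' j)
            ⟨2, by omega, by rw [c2]; simp⟩) (by simp)
      have hB : ∀ j, a j / 2 = 0 := by
        intro j
        by_contra hb
        have hbe : a j / 2 % 2 = 0 := by
          have := hT j; have := hT (j + 1); have := htsucc j; have := hne
          omega
        have hb2 : 2 ≤ a j / 2 := by omega
        have e1 := hR' j 0 (by omega)
        have e2 := hR' j 1 (by omega)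
        obtain ⟨k, hk⟩ : ∃ k, s j / 2 + n = 2 * k := ⟨(s j / 2 + n) / 2, by have := hT j; omega⟩
        apply tm_ne k
        rw [show 2 * k + 1 = s j / 2 + n + 1 by omega, ← hk]
        simp at e1
        rw [e1, e2]
      have htj : ∀ j, s j / 2 = j * n := by
        intro j; induction j with
        | zero => simpa using ht0
        | succ j ih => rw [htsucc j, hB j, ih]; ring
      have hper : ∀ m, tm (m + n) = tm m := by
        have key : ∀ m, tm m = tm (m % n) := by
          intro m
          have h1 := hO' (m / n) (m % n) (Nat.mod_lt _ (by omega))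
          rw [htj] at h1
          rw [Nat.mul_comm (m / n) n, Nat.div_add_mod] at h1
          exact h1
        intro m
        rw [key (m + n), key m, Nat.add_mod_right]
      exact no_period n (by omega) hper
  · -- n odd, n ≥ 3
    have hn3 : 3 ≤ n := by omega
    have hT : ∀ j, s j / 2 % 2 = 0 := by
      intro j
      rcases Nat.mod_two_eq_zero_or_one (s j / 2) with h | h
      · exact h
      · exact absurd (occ_even_pos h (hO' j)
          ⟨n - 1, by omega, by rw [htm_n1]; simp [show (n - 1) % 2 = 0 by omega]⟩) (by simp)
    have hb0 : 1 ≤ a 0 / 2 := by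
      have h01 := htsucc 0
      norm_num at h01
      have := hT 0; have := hT 1
      omega
    have e1 := hR' 0 0 (by omega)
    rw [ht0] at e1
    simp at e1
    obtain ⟨k, hk⟩ : ∃ k, n - 1 = 2 * k := ⟨(n - 1) / 2, by omega⟩
    apply tm_ne k
    rw [show 2 * k + 1 = n by omega, ← hk, htm_n1, e1]
end

section
/- The Thue–Morse sequence is not rank-one: the set A_M = {v ∈ 𝓕 : M is built from v} equals {0}, hence is finite. -/
/-! ### Auxiliary lemmas -/

lemma tm0 : tm 0 = false := by simp [tm]
lemma tm_even (n : ℕ) : tm (2*n) = tm n := by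
  rcases Nat.eq_zero_or_pos n with h|h
  · simp [h]
  · unfold tm
    rw [Nat.digits_def' (by norm_num) (by omega)]
    simp [Nat.mul_div_cancel_left _ (by norm_num : 0 < 2), Nat.mul_mod_right]
lemma tm_odd (n : ℕ) : tm (2*n+1) = !tm n := by
  unfold tm
  rw [Nat.digits_def' (by norm_num) (by omega)]
  have h1 : (2*n+1) % 2 = 1 := by omega
  have h2 : (2*n+1) / 2 = n := by omega
  rw [h1, h2, List.count_cons]
  rcases Nat.mod_two_eq_zero_or_one ((Nat.digits 2 n).count 1) with h|h <;>
    simp [Nat.add_mod, h]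
lemma tm1 : tm 1 = true := by have := tm_odd 0; simpa [tm0] using this
lemma tm2 : tm 2 = true := by have := tm_even 1; rw [tm1] at this; simpa using this
lemma eleven {k : ℕ} (h1 : tm k = true) (h2 : tm (k+1) = true) : k % 2 = 1 := by
  rcases Nat.even_or_odd k with hk | hk
  · exfalso
    obtain ⟨m, hm⟩ := hk
    have hm' : k = 2*m := by omega
    have e1 : tm (2*m) = tm m := tm_even m
    have e2 : tm (2*m+1) = !tm m := tm_odd m
    rw [hm'] at h1 h2
    rw [e1] at h1
    rw [e2, h1] at h2
    simp at h2
  · obtain ⟨m, hm⟩ := hk; omega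
lemma not_per : ∀ P, 0 < P → ¬ ∀ n, tm (n + P) = tm n := by
  intro P
  induction P using Nat.strong_induction_on with
  | _ P ih =>
    intro hP h
    rcases Nat.even_or_odd P with ⟨Q, hQ⟩ | ⟨Q, hQ⟩
    · have hQP : P = 2*Q := by omega
      have hQ0 : 0 < Q := by omega
      refine ih Q (by omega) hQ0 (fun n => ?_)
      have h1 : tm (2*(n+Q)) = tm (n+Q) := tm_even _
      have h2 : tm (2*n) = tm n := tm_even n
      have h3 : tm (2*n + P) = tm (2*n) := h (2*n)
      have e : 2*n + P = 2*(n+Q) := by omega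
      rw [e, h1, h2] at h3; exact h3
    · have hQP : P = 2*Q + 1 := by omega
      rcases Nat.eq_zero_or_pos Q with hQ0 | hQ0
      · have := h 0
        rw [hQP, hQ0] at this
        simp [tm0, tm1] at this
      · -- derive period 2Q
        have per2Q : ∀ n, tm (n + 2*Q) = tm n := by
          have flip : ∀ n, tm (n + Q) = !tm n := by
            intro n
            have h3 : tm (2*n + P) = tm (2*n) := h (2*n)
            have e : 2*n + P = 2*(n+Q) + 1 := by omega
            rw [e, tm_odd, tm_even] at h3
            cases hb : tm n <;> rw [hb] at h3 <;> simp at h3 <;> simp [h3]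
          intro n
          have := flip (n + Q)
          rw [flip n] at this
          simpa [Nat.add_assoc, two_mul, Nat.add_comm Q Q, ← Nat.add_assoc] using this
        have h1 : tm 1 = tm 0 := by
          have a1 : tm (1 + 2*Q) = tm 1 := per2Q 1
          have a2 : tm (0 + P) = tm 0 := h 0
          rw [show (0:ℕ) + P = 1 + 2*Q by omega] at a2
          rw [a1] at a2; exact a2
        rw [tm0, tm1] at h1; simp at h1

lemma ones_length (a : ℕ) : (ones a).length = a := by simp [ones]

lemma ones_getD {a j : ℕ} (hj : j < a) : (ones a).getD j false = true := by
  simp [ones, List.getD_eq_getElem?_getD, List.getElem?_replicate, hj]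

lemma getD_mid (l₁ l₂ l₃ : List Bool) {j : ℕ} (hj : j < l₂.length) :
    (l₁ ++ l₂ ++ l₃).getD (l₁.length + j) false = l₂.getD j false := by
  rw [List.getD_append _ _ _ _ (by simp only [List.length_append]; omega),
      List.getD_append_right _ _ _ _ (by omega)]
  congr 1
  omega

lemma getD_last (l₁ l₂ l₃ : List Bool) (i : ℕ) :
    (l₁ ++ l₂ ++ l₃).getD ((l₁ ++ l₂).length + i) false = l₃.getD i false := by
  rw [List.getD_append_right _ _ _ _ (by omega)]
  congr 1
  omega

lemma stage_succ (v : List Bool) (a : ℕ → ℕ) (n : ℕ) :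
    stage v a (n+1) = stage v a n ++ ones (a n) ++ v := rfl

lemma stage_length_succ (v : List Bool) (a : ℕ → ℕ) (n : ℕ) :
    (stage v a (n+1)).length = (stage v a n).length + a n + v.length := by
  rw [stage_succ, List.length_append, List.length_append, ones_length]

lemma forward {v : List Bool} (hv : v ∈ AV tm) : v = [false] := by
  obtain ⟨⟨hh, hl⟩, a, hpre⟩ := hv
  have hne : v ≠ [] := by intro h; rw [h] at hh; simp at hh
  have hlen1 : 1 ≤ v.length := List.length_pos_iff.mpr hne
  have hv0 : ∀ i, i < v.length → v.getD i false = tm i := hpre 0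
  have hlast : v.getD (v.length - 1) false = false := by
    rw [List.getD_eq_getElem?_getD, ← List.getLast?_eq_getElem?, hl]
    rfl
  have hlast' : tm (v.length - 1) = false := by
    rw [← hv0 (v.length - 1) (by omega)]; exact hlast
  by_cases h1 : v.length = 1
  · cases v with
    | nil => exact absurd rfl hne
    | cons b t =>
      cases t with
      | nil =>
        simp only [List.head?_cons, Option.some.injEq] at hh
        rw [hh]
      | cons c t' => exfalso; simp only [List.length_cons] at h1; omega
  · exfalso
    have hlen2 : 2 ≤ v.length := by omega
    have hg1 : v.getD 1 false = true := by rw [hv0 1 (by omega)]; exact tm1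
    have hlen3 : 3 ≤ v.length := by
      by_contra hc
      have h2 : v.length - 1 = 1 := by omega
      rw [h2, tm1] at hlast'
      exact absurd hlast' (by simp)
    have hg2 : v.getD 2 false = true := by rw [hv0 2 (by omega)]; exact tm2
    have occ_ones : ∀ n j, j < a n → tm ((stage v a n).length + j) = true := by
      intro n j hj
      have hlt : (stage v a n).length + j < (stage v a (n+1)).length := by
        rw [stage_length_succ]; omega
      have h := hpre (n+1) _ hlt
      rw [stage_succ, getD_mid _ _ _ (by rw [ones_length]; exact hj), ones_getD hj] at h
      exact h.symm
    have occ_v : ∀ n i, i < v.length →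
        tm ((stage v a n).length + a n + i) = v.getD i false := by
      intro n i hi
      have e : (stage v a n ++ ones (a n)).length = (stage v a n).length + a n := by
        simp [List.length_append, ones_length]
      have hlt : (stage v a n ++ ones (a n)).length + i < (stage v a (n+1)).length := by
        rw [stage_length_succ, e]; omega
      have h := hpre (n+1) _ hlt
      rw [stage_succ, getD_last] at h
      rw [show (stage v a n).length + a n + i
          = (stage v a n ++ ones (a n)).length + i by rw [e]]
      exact h.symm
    have pos_even : ∀ n, ((stage v a n).length + a n) % 2 = 0 := by
      intro n
      have t1 : tm ((stage v a n).length + a n + 1) = true := by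
        rw [occ_v n 1 (by omega)]; exact hg1
      have t2 : tm ((stage v a n).length + a n + 1 + 1) = true := by
        rw [show (stage v a n).length + a n + 1 + 1
            = (stage v a n).length + a n + 2 by omega, occ_v n 2 (by omega)]
        exact hg2
      have := eleven t1 t2
      omega
    have L_par : ∀ n, (stage v a n).length % 2 = v.length % 2 := by
      intro n
      induction n with
      | zero => rfl
      | succ n ih =>
        have hp := pos_even n
        rw [stage_length_succ]
        omega
    have a_par : ∀ n, a n % 2 = v.length % 2 := by
      intro n
      have h1 := pos_even n
      have h2 := L_par n
      omega
    have a_le : ∀ n, a n ≤ 2 := by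
      intro n
      by_contra hgt
      have t0 := occ_ones n 0 (by omega)
      have t1 := occ_ones n 1 (by omega)
      have t2 := occ_ones n 2 (by omega)
      rw [show (stage v a n).length + 0 = (stage v a n).length by omega] at t0
      have e1 := eleven t0 t1
      have e2 := eleven t1
        (by rw [show (stage v a n).length + 1 + 1 = (stage v a n).length + 2 by omega]; exact t2)
      omega
    have a_const : ∀ n, a n = v.length % 2 := by
      intro n
      rcases Nat.mod_two_eq_zero_or_one v.length with hp | hp
      · rw [hp]
        have hcase : a n = 0 ∨ a n = 2 := by
          have := a_par n; have := a_le n; omega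
        rcases hcase with h0 | h2
        · exact h0
        · exfalso
          have t0 := occ_ones n 0 (by omega)
          have t1 := occ_ones n 1 (by omega)
          rw [show (stage v a n).length + 0 = (stage v a n).length by omega] at t0
          have e1 := eleven t0 t1
          have := L_par n
          omega
      · have := a_par n; have := a_le n; omega
    set w : List Bool := v ++ ones (v.length % 2) with hw
    set P : ℕ := w.length with hP
    have hPv : P = v.length + v.length % 2 := by
      rw [hP, hw, List.length_append, ones_length]
    have hPpos : 0 < P := by omega
    have stage_const : ∀ n,
        stage v a n ++ ones (v.length % 2) = (List.replicate (n+1) w).flatten := by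
      intro n
      induction n with
      | zero => simp [stage, hw]
      | succ n ih =>
        rw [stage_succ, a_const n]
        have e1 : stage v a n ++ ones (v.length % 2) ++ v ++ ones (v.length % 2)
            = (stage v a n ++ ones (v.length % 2)) ++ (v ++ ones (v.length % 2)) := by
          simp [List.append_assoc]
        rw [e1, ih, ← hw]
        rw [List.replicate_succ' (n := n+1) (a := w)]
        simp [List.flatten_append]
    have join_getD : ∀ k i, i < k * P →
        ((List.replicate k w).flatten).getD i false = w.getD (i % P) false := by
      intro k
      induction k with
      | zero => intro i hi; omega
      | succ k ih =>
        intro i hi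
        rw [List.replicate_succ, List.flatten_cons]
        by_cases hiP : i < P
        · rw [List.getD_append _ _ _ _ (by rw [← hP]; exact hiP), Nat.mod_eq_of_lt hiP]
        · push_neg at hiP
          have hkP : (k+1) * P = k * P + P := by ring
          rw [List.getD_append_right _ _ _ _ (by rw [← hP]; exact hiP)]
          rw [← hP]
          rw [ih (i - P) (by omega)]
          congr 1
          rw [Nat.mod_eq_sub_mod hiP]
    have join_len : ∀ k, ((List.replicate k w).flatten).length = k * P := by
      intro k
      rw [List.length_flatten]
      simp [List.map_replicate, List.sum_replicate, smul_eq_mul, hP]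
    have tm_eq : ∀ m, tm m = w.getD (m % P) false := by
      intro m
      have hm : m < (m+1) * P := by
        calc m < m + 1 := Nat.lt_succ_self m
        _ ≤ (m+1) * P := Nat.le_mul_of_pos_right _ hPpos
      have hsc := stage_const m
      have hlenm : (stage v a m).length + v.length % 2 = (m+1) * P := by
        have h := congrArg List.length hsc
        rw [List.length_append, ones_length, join_len] at h
        exact h
      have hstep : (stage v a (m+1)).getD m false
          = (stage v a m ++ ones (v.length % 2)).getD m false := by
        rw [stage_succ, a_const m]
        rw [List.getD_append _ _ _ _ (by
          simp only [List.length_append, ones_length]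
          omega)]
      have hpm := hpre (m+1) m (by rw [stage_length_succ, a_const m]; omega)
      rw [hstep, hsc, join_getD (m+1) m hm] at hpm
      exact hpm.symm
    have hper : ∀ m, tm (m + P) = tm m := by
      intro m
      rw [tm_eq, tm_eq, Nat.add_mod_right]
    exact not_per P hPpos hper

def nextz (p : ℕ) : ℕ :=
  if tm (p+1) = false then p+1 else if tm (p+2) = false then p+2 else p+3

def zz : ℕ → ℕ
  | 0 => 0
  | n + 1 => nextz (zz n)

lemma nextz_gt (p : ℕ) : p < nextz p := by
  unfold nextz
  split
  · omega
  · split <;> omega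

lemma nextz_false (p : ℕ) : tm (nextz p) = false := by
  unfold nextz
  split
  · next h => exact h
  · next h1 =>
    split
    · next h => exact h
    · next h2 =>
      by_contra h3
      have t1 : tm (p+1) = true := by
        cases hb : tm (p+1)
        · exact absurd hb h1
        · rfl
      have t2 : tm (p+2) = true := by
        cases hb : tm (p+2)
        · exact absurd hb h2
        · rfl
      have t3 : tm (p+3) = true := by
        cases hb : tm (p+3)
        · exact absurd hb h3
        · rfl
      have e1 := eleven t1 (by rw [show p+1+1 = p+2 by omega]; exact t2)
      have e2 := eleven t2 (by rw [show p+2+1 = p+3 by omega]; exact t3)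
      omega

lemma between {p q : ℕ} (h1 : p < q) (h2 : q < nextz p) : tm q = true := by
  unfold nextz at h2
  split at h2
  · omega
  · next ha =>
    split at h2
    · have hq : q = p + 1 := by omega
      subst hq
      cases hb : tm (p+1)
      · exact absurd hb ha
      · rfl
    · next hb =>
      have hq : q = p + 1 ∨ q = p + 2 := by omega
      rcases hq with h | h <;> subst h
      · cases hc : tm (p+1)
        · exact absurd hc ha
        · rfl
      · cases hc : tm (p+2)
        · exact absurd hc hb
        · rfl

lemma zz_false (n : ℕ) : tm (zz n) = false := by
  cases n with
  | zero => exact tm0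
  | succ n => exact nextz_false (zz n)

lemma zz_lt (n : ℕ) : zz n < zz (n+1) := nextz_gt (zz n)

lemma built : BuiltFrom tm [false] := by
  refine ⟨fun n => zz (n+1) - zz n - 1, ?_⟩
  have key : ∀ n, (stage [false] (fun n => zz (n+1) - zz n - 1) n).length = zz n + 1 ∧
      PrefixOf (stage [false] (fun n => zz (n+1) - zz n - 1) n) tm := by
    intro n
    induction n with
    | zero =>
      refine ⟨rfl, ?_⟩
      intro i hi
      have h0 : i = 0 := by
        have hl : (stage [false] (fun n => zz (n+1) - zz n - 1) 0).length = 1 := rfl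
        omega
      subst h0
      show ([false] : List Bool).getD 0 false = tm 0
      simp [tm0]
    | succ n ih =>
      obtain ⟨ihl, ihp⟩ := ih
      have hz := zz_lt n
      have hlen : (stage [false] (fun n => zz (n+1) - zz n - 1) (n+1)).length
          = zz (n+1) + 1 := by
        rw [stage_length_succ, ihl]
        simp only [List.length_singleton]
        omega
      refine ⟨hlen, ?_⟩
      intro i hi
      rw [hlen] at hi
      rw [stage_succ]
      have e : (stage [false] (fun n => zz (n+1) - zz n - 1) n
          ++ ones (zz (n+1) - zz n - 1)).length = zz (n+1) := by
        simp only [List.length_append, ones_length, ihl]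
        omega
      by_cases hc1 : i < zz n + 1
      · rw [List.getD_append _ _ _ _ (by rw [e]; omega)]
        rw [List.getD_append _ _ _ _ (by rw [ihl]; exact hc1)]
        exact ihp i (by rw [ihl]; exact hc1)
      · by_cases hc2 : i = zz (n+1)
        · rw [List.getD_append_right _ _ _ _ (by rw [e]; omega)]
          rw [e, hc2]
          simp only [Nat.sub_self]
          simpa using (zz_false (n+1)).symm
        · have hj : i - (zz n + 1) < zz (n+1) - zz n - 1 := by omega
          have hidx : i = (stage [false] (fun n => zz (n+1) - zz n - 1) n).length
              + (i - (zz n + 1)) := by rw [ihl]; omega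
          rw [hidx, getD_mid _ _ _ (by rw [ones_length]; exact hj), ones_getD hj]
          have ht : tm i = true := by
            refine between (p := zz n) (q := i) (by omega) ?_
            have hnz : nextz (zz n) = zz (n+1) := rfl
            omega
          rw [← hidx, ht]
  exact fun n => (key n).2

theorem stmt6 : AV tm = {[false]} ∧ (AV tm).Finite := by
  have he : AV tm = {[false]} := by
    ext v
    simp only [Set.mem_singleton_iff]
    constructor
    · exact forward
    · rintro rfl
      exact ⟨⟨rfl, rfl⟩, built⟩
  exact ⟨he, he ▸ Set.finite_singleton _⟩
end
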